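/- Every finite directed graph Γ = (V, E, s, r) with V nonempty has a regular specialization; i.e., there exists a specialization γ such that (1) there are only finitely many special paths all of whose vertices lie in V ∖ (W₁ ∪ ⋯ ∪ W_k), where W₁, …, W_k is the frame of Γ, and (2) for each i with 1 ≤ i ≤ k, the undirected graph on W_i whose edges come from the special edges with source in W_i (all of which lie in E(W_i, W_i) since W_i is hereditary) is connected. -/

import Mathlib

/-- `w` is a descendant of `v`: there is a (possibly empty) path from `v` to `w`. -/
def Descendant {V E : Type*} (s r : E → V) : V → V → Prop :=
  Relation.ReflTransGen fun a b => ∃ e, s e = a ∧ r e = b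

/-- A nonempty subset `W ⊆ V` is hereditary if all descendants of its vertices lie in `W`. -/
def Hereditary {V E : Type*} (s r : E → V) (W : Set V) : Prop :=
  W.Nonempty ∧ ∀ v ∈ W, ∀ w, Descendant s r v w → w ∈ W

/-- A minimal hereditary subset: hereditary and minimal under inclusion among
hereditary subsets. -/
def MinHereditary {V E : Type*} (s r : E → V) (W : Set V) : Prop :=
  Hereditary s r W ∧ ∀ U : Set V, Hereditary s r U → U ⊆ W → U = W

/-- The union `W₁ ∪ ⋯ ∪ W_k` of all minimal hereditary subsets (the frame) of the graph. -/
def frameUnion {V E : Type*} (s r : E → V) : Set V :=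
  {v | ∃ W : Set V, MinHereditary s r W ∧ v ∈ W}

section Aux
variable {V E : Type*} (s r : E → V)

lemma desc_hered (v : V) : Hereditary s r {w | Descendant s r v w} :=
  ⟨⟨v, Relation.ReflTransGen.refl⟩, fun _ hx w hxw => hx.trans hxw⟩

lemma exists_minHered [Finite V] {U : Set V} (hU : Hereditary s r U) :
    ∃ W : Set V, MinHereditary s r W ∧ W ⊆ U := by
  obtain ⟨W, ⟨hW, hWU⟩, hmin⟩ := Set.Finite.exists_minimal
    (s := {X | Hereditary s r X ∧ X ⊆ U}) (Set.toFinite _) ⟨U, hU, subset_rfl⟩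
  exact ⟨W, ⟨hW, fun X hX hXW => subset_antisymm hXW (hmin ⟨hX, hXW.trans hWU⟩ hXW)⟩, hWU⟩

lemma minHered_eq {W₁ W₂ : Set V} (h₁ : MinHereditary s r W₁) (h₂ : MinHereditary s r W₂)
    {v : V} (hv₁ : v ∈ W₁) (hv₂ : v ∈ W₂) : W₁ = W₂ := by
  have hi : Hereditary s r (W₁ ∩ W₂) :=
    ⟨⟨v, hv₁, hv₂⟩, fun x hx w hxw => ⟨h₁.1.2 x hx.1 w hxw, h₂.1.2 x hx.2 w hxw⟩⟩
  exact (h₁.2 _ hi Set.inter_subset_left).symm.trans (h₂.2 _ hi Set.inter_subset_right)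

lemma minHered_strong {W : Set V} (hW : MinHereditary s r W) {v w : V}
    (hv : v ∈ W) (hw : w ∈ W) : Descendant s r v w := by
  have hsub : {x | Descendant s r v x} ⊆ W := fun x hx => hW.1.2 v hv x hx
  have := hW.2 _ (desc_hered s r v) hsub
  rw [← this] at hw; exact hw

end Aux


/-- Every finite directed graph `(V, E, s, r)` with `V` nonempty has a
regular specialization: there is a specialization `γ` (a map from non-sink vertices
to edges with `s (γ v) = v`; special edges are those in the image of `γ`) such that
(1) there are only finitely many special paths all of whose vertices (the sources of all
their edges and the range of the last edge) lie outside `W₁ ∪ ⋯ ∪ W_k`, where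
`W₁, …, W_k` is the frame of the graph (the minimal hereditary subsets), and
(2) for each minimal hereditary subset `Wᵢ`, the undirected graph on `Wᵢ` whose edges
come from the special edges with source in `Wᵢ` is connected. -/
theorem exists_regular_specialization
    {V E : Type*} [Fintype V] [Fintype E] [Nonempty V]
    (s r : E → V) :
    ∃ γ : {u : V // ∃ e, s e = u} → E,
      (∀ u, s (γ u) = u.1) ∧
      {p : List E | p ≠ [] ∧ p.Chain' (fun e f => r e = s f) ∧
          (∀ e ∈ p, ∃ u, γ u = e) ∧
          (∀ e ∈ p, s e ∉ frameUnion s r) ∧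
          ∀ h : p ≠ [], r (p.getLast h) ∉ frameUnion s r}.Finite ∧
      ∀ W : Set V, MinHereditary s r W → ∀ a ∈ W, ∀ b ∈ W,
        Relation.ReflTransGen
          (fun x y => ∃ e, (∃ u, γ u = e) ∧ s e ∈ W ∧
            ((s e = x ∧ r e = y) ∨ (s e = y ∧ r e = x)))
          a b := by
  classical
  -- representatives of minimal hereditary sets
  have hrep : ∀ W : Set V, ∃ v, MinHereditary s r W → v ∈ W := by
    intro W
    by_cases h : MinHereditary s r W
    · obtain ⟨v, hv⟩ := h.1.1; exact ⟨v, fun _ => hv⟩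
    · exact ⟨Classical.arbitrary V, fun h' => absurd h' h⟩
  choose rep hrepmem using hrep
  set D : Set V := {v | ∃ W : Set V, MinHereditary s r W ∧ rep W = v} with hD
  have hDF : D ⊆ frameUnion s r := by
    rintro v ⟨W, hW, rfl⟩; exact ⟨W, hW, hrepmem W hW⟩
  -- reachability layers
  set S : ℕ → Set V := fun n =>
    Nat.rec D (fun _ Sn => Sn ∪ {v | ∃ e, s e = v ∧ r e ∈ Sn}) n with hS
  have hS0 : S 0 = D := rfl
  have hSsucc : ∀ n, S (n + 1) = S n ∪ {v | ∃ e, s e = v ∧ r e ∈ S n} := fun _ => rfl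
  -- every vertex reaches D
  have hreachD : ∀ v : V, ∃ w ∈ D, Descendant s r v w := by
    intro v
    obtain ⟨W, hW, hWsub⟩ := exists_minHered s r (desc_hered s r v)
    exact ⟨rep W, ⟨W, hW, rfl⟩, hWsub (hrepmem W hW)⟩
  have hex : ∀ v : V, ∃ n, v ∈ S n := by
    intro v
    obtain ⟨w, hw, hvw⟩ := hreachD v
    clear hreachD
    induction hvw using Relation.ReflTransGen.head_induction_on with
    | refl => exact ⟨0, hw⟩
    | head hstep _ ih =>
      obtain ⟨n, hn⟩ := ih
      obtain ⟨e, he1, he2⟩ := hstep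
      exact ⟨n + 1, Or.inr ⟨e, he1, he2 ▸ hn⟩⟩
  set d : V → ℕ := fun v => Nat.find (hex v) with hd
  have hdspec : ∀ v, v ∈ S (d v) := fun v => Nat.find_spec (hex v)
  have hdle : ∀ v n, v ∈ S n → d v ≤ n := fun v n h => Nat.find_le h
  -- decreasing edge from vertices outside D
  have hdec : ∀ v : V, v ∉ D → ∃ e, s e = v ∧ d (r e) < d v := by
    intro v hv
    have hd0 : d v ≠ 0 := fun h => hv (hS0 ▸ (h ▸ hdspec v))
    obtain ⟨m, hm⟩ := Nat.exists_eq_succ_of_ne_zero hd0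
    have h1 := hdspec v
    rw [hm, hSsucc] at h1
    have hmlt : m < d v := by omega
    have h2 : v ∉ S m := Nat.find_min (hex v) hmlt
    obtain ⟨e, he1, he2⟩ := h1.resolve_left h2
    exact ⟨e, he1, by have := hdle (r e) m he2; omega⟩
  choose ε hε1 hε2 using hdec
  -- the specialization
  set γ : {u : V // ∃ e, s e = u} → E := fun u =>
    if h : u.1 ∈ D then Classical.choose u.2 else ε u.1 h with hγ
  have hγs : ∀ u, s (γ u) = u.1 := by
    intro u
    by_cases h : u.1 ∈ D
    · simp only [hγ, dif_pos h]; exact Classical.choose_spec u.2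
    · simp only [hγ, dif_neg h]; exact hε1 u.1 h
  -- special edges with source outside D decrease d
  have hspecdec : ∀ e : E, (∃ u, γ u = e) → s e ∉ D → d (r e) < d (s e) := by
    rintro e ⟨u, rfl⟩ hDe
    have h' : u.1 ∉ D := hγs u ▸ hDe
    have heq : γ u = ε u.1 h' := dif_neg h'
    rw [heq, hε1 u.1 h']
    exact hε2 u.1 h'
  -- length bound for decreasing chains
  have hbound : ∀ p : List E, p.Chain' (fun e f => r e = s f) →
      (∀ e ∈ p, d (r e) < d (s e)) → ∀ h : p ≠ [],
      p.length + d (r (p.getLast h)) ≤ d (s (p.head h)) := by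
    intro p
    induction p with
    | nil => intro _ _ h; exact absurd rfl h
    | cons e t ih =>
      intro hc hlt h
      cases t with
      | nil =>
        simp only [List.getLast_singleton, List.head_cons, List.length_cons,
          List.length_nil]
        have := hlt e (by simp)
        omega
      | cons f t' =>
        have hc' : (f :: t').Chain' (fun e f => r e = s f) := hc.tail
        have href : r e = s f := List.isChain_cons_cons.mp hc |>.1
        have hlt' : ∀ x ∈ f :: t', d (r x) < d (s x) := fun x hx => hlt x (by simp [hx])
        have ih' := ih hc' hlt' (by simp)
        have hlast : (e :: f :: t').getLast h = (f :: t').getLast (by simp) :=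
          List.getLast_cons _
        rw [hlast]
        have h1 := hlt e (by simp)
        simp only [List.head_cons] at ih' ⊢
        rw [href] at h1
        simp only [List.length_cons] at ih' ⊢
        omega
  refine ⟨γ, hγs, ?_, ?_⟩
  · -- finiteness
    apply Set.Finite.subset (List.finite_length_le E (Finset.univ.sup d))
    rintro p ⟨hne, hchain, hsp, hout, -⟩
    have hlt : ∀ e ∈ p, d (r e) < d (s e) := fun e he =>
      hspecdec e (hsp e he) (fun hc => hout e he (hDF hc))
    have h1 := hbound p hchain hlt hne
    have h2 : d (s (p.head hne)) ≤ Finset.univ.sup d :=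
      Finset.le_sup (Finset.mem_univ _)
    simp only [Set.mem_setOf_eq]
    omega
  · -- connectivity of minimal hereditary sets
    intro W hW a ha b hb
    set Rel : V → V → Prop := fun x y => ∃ e, (∃ u, γ u = e) ∧ s e ∈ W ∧
      ((s e = x ∧ r e = y) ∨ (s e = y ∧ r e = x)) with hRel
    have conn : ∀ n, ∀ a ∈ W, d a = n → Relation.ReflTransGen Rel a (rep W) := by
      intro n
      induction n using Nat.strong_induction_on with
      | _ n ih =>
        intro a ha hdn
        by_cases haD : a ∈ D
        · obtain ⟨W', hW', hrw⟩ := haD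
          have hWW : W' = W := minHered_eq s r hW' hW (hrw ▸ hrepmem W' hW') ha
          rw [← hWW, hrw]
        · have hns : ∃ e, s e = a := ⟨ε a haD, hε1 a haD⟩
          set u : {u : V // ∃ e, s e = u} := ⟨a, hns⟩ with hu
          have hse : s (γ u) = a := hγs u
          have hdesc : Descendant s r a (r (γ u)) :=
            Relation.ReflTransGen.single ⟨γ u, hse, rfl⟩
          have hrW : r (γ u) ∈ W := hW.1.2 a ha _ hdesc
          have hdlt : d (r (γ u)) < d a := by
            have := hspecdec (γ u) ⟨u, rfl⟩ (hse ▸ haD)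
            rwa [hse] at this
          have hstep : Rel a (r (γ u)) :=
            ⟨γ u, ⟨u, rfl⟩, hse ▸ ha, Or.inl ⟨hse, rfl⟩⟩
          exact Relation.ReflTransGen.head hstep
            (ih (d (r (γ u))) (by omega) _ hrW rfl)
    have hsymm : Symmetric Rel := by
      rintro x y ⟨e, hsp, hse, h⟩
      exact ⟨e, hsp, hse, h.symm⟩
    exact (conn _ a ha rfl).trans
      (by haveI : Std.Symm Rel := ⟨fun _ _ h => hsymm h⟩; exact Std.Symm.symm _ _ (conn _ b hb rfl))
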